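/- Let Ω ⊆ ℝ have finite Lebesgue measure and let p, q : Ω → [1,∞] be measurable with q ≤ p a.e. on Ω. Then L^{p(x)}(Ω : X) embeds continuously into L^{q(x)}(Ω : X). -/

import Mathlib

open MeasureTheory Set ENNReal Real
noncomputable section

/-- The Young-type function `φ_{p}(t)`: `t^p` for `p < ∞`, and `0` for `t ≤ 1`, `∞` for `t > 1`
when `p = ∞`. -/
def phiVar (p : ℝ≥0∞) (t : ℝ) : ℝ≥0∞ :=
  if p = ⊤ then (if t ≤ 1 then 0 else ⊤) else ENNReal.ofReal (t ^ p.toReal)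

/-- The modular `ρ(g) = ∫_Ω φ_{p(x)}(g(x)) dx` of a nonnegative function `g`. -/
def rhoVar (p : ℝ → ℝ≥0∞) (Ω : Set ℝ) (g : ℝ → ℝ) : ℝ≥0∞ :=
  ∫⁻ x in Ω, phiVar (p x) (g x)

/-- The Luxemburg norm of `f` on `Ω` with variable exponent `p`. -/
def luxNorm {X : Type*} [NormedAddCommGroup X] (p : ℝ → ℝ≥0∞) (Ω : Set ℝ) (f : ℝ → X) : ℝ :=
  sInf {lam : ℝ | 0 < lam ∧ rhoVar p Ω (fun x => ‖f x‖ / lam) ≤ 1}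

/-- Membership in the variable-exponent Lebesgue space `L^{p(x)}(Ω : X)`. -/
def MemLvar {X : Type*} [NormedAddCommGroup X] (p : ℝ → ℝ≥0∞) (Ω : Set ℝ) (f : ℝ → X) : Prop :=
  AEStronglyMeasurable f (volume.restrict Ω) ∧
    ∃ lam > 0, rhoVar p Ω (fun x => lam * ‖f x‖) < ⊤

/-- Stepanov `p(x)`-boundedness: all translates lie in `L^{p(x)}([0,1]:X)` with uniformly
bounded Luxemburg norms. -/
def StepanovBounded {X : Type*} [NormedAddCommGroup X] (p : ℝ → ℝ≥0∞) (I : Set ℝ)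
    (f : ℝ → X) : Prop :=
  (∀ t ∈ I, MemLvar p (Icc 0 1) (fun s => f (t + s))) ∧
    ∃ C : ℝ, ∀ t ∈ I, luxNorm p (Icc 0 1) (fun s => f (t + s)) ≤ C

/-- The Stepanov `p(x)`-norm `sup_{t ∈ I} ‖f(t+·)‖_{L^{p(x)}[0,1]}`. -/
def stepNorm {X : Type*} [NormedAddCommGroup X] (p : ℝ → ℝ≥0∞) (I : Set ℝ) (f : ℝ → X) : ℝ :=
  sSup ((fun t => luxNorm p (Icc 0 1) (fun s => f (t + s))) '' I)

/-- `S` is relatively dense in `I`: there is `l > 0` such that every subinterval of `I` of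
length `l` meets `S`. -/
def RelDenseIn (I S : Set ℝ) : Prop :=
  ∃ l > 0, ∀ a : ℝ, Icc a (a + l) ⊆ I → (S ∩ Icc a (a + l)).Nonempty

/-- Bohr almost periodicity of `f : I → X`. -/
def AlmostPeriodicOn {X : Type*} [NormedAddCommGroup X] (I : Set ℝ) (f : ℝ → X) : Prop :=
  ContinuousOn f I ∧
    ∀ ε > 0, RelDenseIn I {τ | 0 < τ ∧ ∀ t ∈ I, ‖f (t + τ) - f t‖ ≤ ε}

/-- Stepanov `p(x)`-almost periodicity: the map `t ↦ f(t+·)` into `L^{p(x)}([0,1]:X)` is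
well defined, continuous and almost periodic. -/
def StepanovAP {X : Type*} [NormedAddCommGroup X] (p : ℝ → ℝ≥0∞) (I : Set ℝ) (f : ℝ → X) : Prop :=
  (∀ t ∈ I, MemLvar p (Icc 0 1) (fun s => f (t + s))) ∧
  (∀ t ∈ I, ∀ ε > 0, ∃ δ > 0, ∀ t' ∈ I, |t' - t| < δ →
      luxNorm p (Icc 0 1) (fun s => f (t' + s) - f (t + s)) ≤ ε) ∧
  (∀ ε > 0, RelDenseIn I
      {τ | 0 < τ ∧ ∀ t ∈ I, luxNorm p (Icc 0 1) (fun s => f (t + τ + s) - f (t + s)) ≤ ε})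


lemma phiVar_le_add_one {p q : ℝ≥0∞} {t : ℝ} (hqp : q ≤ p) (ht : 0 ≤ t) :
    phiVar q t ≤ phiVar p t + 1 := by
  unfold phiVar
  by_cases hq : q = ⊤
  · have hp : p = ⊤ := top_le_iff.mp (hq ▸ hqp)
    simp only [hq, hp, if_true]
    split_ifs <;> simp
  · by_cases hp : p = ⊤
    · simp only [hq, hp, if_true, if_false]
      split_ifs with h
      · calc ENNReal.ofReal (t ^ q.toReal) ≤ 1 := by
              rw [← ENNReal.ofReal_one]
              exact ENNReal.ofReal_le_ofReal (Real.rpow_le_one ht h ENNReal.toReal_nonneg)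
          _ ≤ 0 + 1 := by simp
      · simp
    · simp only [hq, hp, if_false]
      have hq' : q.toReal ≤ p.toReal := ENNReal.toReal_mono hp hqp
      by_cases h : t ≤ 1
      · calc ENNReal.ofReal (t ^ q.toReal) ≤ 1 := by
              rw [← ENNReal.ofReal_one]
              exact ENNReal.ofReal_le_ofReal (Real.rpow_le_one ht h ENNReal.toReal_nonneg)
          _ ≤ ENNReal.ofReal (t ^ p.toReal) + 1 := le_add_self
      · have ht1 : 1 ≤ t := le_of_lt (not_le.mp h)
        calc ENNReal.ofReal (t ^ q.toReal)
            ≤ ENNReal.ofReal (t ^ p.toReal) :=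
              ENNReal.ofReal_le_ofReal (Real.rpow_le_rpow_of_exponent_le ht1 hq')
          _ ≤ ENNReal.ofReal (t ^ p.toReal) + 1 := le_self_add

lemma phiVar_div_le {q : ℝ≥0∞} {t c : ℝ} (hq1 : 1 ≤ q) (hc : 1 ≤ c) (ht : 0 ≤ t) :
    phiVar q (t / c) ≤ phiVar q t / ENNReal.ofReal c := by
  have hc0 : 0 < c := lt_of_lt_of_le one_pos hc
  unfold phiVar
  by_cases hq : q = ⊤
  · simp only [hq, if_true]
    split_ifs with h1 h2 h3
    · exact zero_le
    · exact zero_le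
    · exact absurd (le_trans (div_le_self ht hc) h3) h1
    · rw [ENNReal.top_div_of_ne_top ENNReal.ofReal_ne_top]
  · have hq' : 1 ≤ q.toReal := by
      have := ENNReal.toReal_mono hq hq1
      simpa using this
    simp only [hq, if_false]
    rw [Real.div_rpow ht (le_of_lt hc0),
      ENNReal.ofReal_div_of_pos (Real.rpow_pos_of_pos hc0 _)]
    refine ENNReal.div_le_div le_rfl ?_
    refine ENNReal.ofReal_le_ofReal ?_
    calc c = c ^ (1 : ℝ) := (Real.rpow_one c).symm
      _ ≤ c ^ q.toReal := Real.rpow_le_rpow_of_exponent_le hc hq'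

lemma rhoVar_le_add {p q : ℝ → ℝ≥0∞} {Ω : Set ℝ} {g : ℝ → ℝ}
    (hqp : ∀ᵐ x ∂(volume.restrict Ω), q x ≤ p x) (hg : ∀ x, 0 ≤ g x) :
    rhoVar q Ω g ≤ rhoVar p Ω g + volume Ω := by
  unfold rhoVar
  calc ∫⁻ x in Ω, phiVar (q x) (g x)
      ≤ ∫⁻ x in Ω, (phiVar (p x) (g x) + 1) :=
        lintegral_mono_ae (hqp.mono fun x hx => phiVar_le_add_one hx (hg x))
    _ = (∫⁻ x in Ω, phiVar (p x) (g x)) + ∫⁻ _ in Ω, (1 : ℝ≥0∞) :=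
        lintegral_add_right _ measurable_const
    _ = (∫⁻ x in Ω, phiVar (p x) (g x)) + volume Ω := by
        rw [setLIntegral_one]

lemma rhoVar_div_le {q : ℝ → ℝ≥0∞} {Ω : Set ℝ} {g : ℝ → ℝ} {c : ℝ}
    (hq1 : ∀ x, 1 ≤ q x) (hc : 1 ≤ c) (hg : ∀ x, 0 ≤ g x) :
    rhoVar q Ω (fun x => g x / c) ≤ rhoVar q Ω g / ENNReal.ofReal c := by
  have hc0 : (0 : ℝ) < c := lt_of_lt_of_le one_pos hc
  unfold rhoVar
  calc ∫⁻ x in Ω, phiVar (q x) (g x / c)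
      ≤ ∫⁻ x in Ω, phiVar (q x) (g x) / ENNReal.ofReal c :=
        lintegral_mono fun x => phiVar_div_le (hq1 x) hc (hg x)
    _ = (∫⁻ x in Ω, phiVar (q x) (g x)) / ENNReal.ofReal c := by
        simp_rw [div_eq_mul_inv]
        exact lintegral_mul_const' _ _
          (ENNReal.inv_ne_top.mpr (ENNReal.ofReal_pos.mpr hc0).ne')

theorem stmt2 {X : Type*} [NormedAddCommGroup X] (Ω : Set ℝ) (hΩ : MeasurableSet Ω)
    (hfin : volume Ω < ⊤)
    (p q : ℝ → ℝ≥0∞) (hpm : Measurable p) (hqm : Measurable q)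
    (hp1 : ∀ x, 1 ≤ p x) (hq1 : ∀ x, 1 ≤ q x)
    (hqp : ∀ᵐ x ∂(volume.restrict Ω), q x ≤ p x) :
    ∃ C > 0, ∀ f : ℝ → X, MemLvar p Ω f →
      MemLvar q Ω f ∧ luxNorm q Ω f ≤ C * luxNorm p Ω f := by
  set M := volume Ω with hM
  have hMne : M ≠ ⊤ := hfin.ne
  set C : ℝ := M.toReal + 1 with hCdef
  have hC1 : (1 : ℝ) ≤ C := by
    simp [hCdef]
  have hCpos : (0 : ℝ) < C := lt_of_lt_of_le one_pos hC1
  have hCof : ENNReal.ofReal C = M + 1 := by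
    rw [hCdef, ENNReal.ofReal_add ENNReal.toReal_nonneg zero_le_one,
      ENNReal.ofReal_toReal hMne, ENNReal.ofReal_one]
  refine ⟨C, hCpos, fun f hf => ?_⟩
  obtain ⟨hmeas, lam0, hlam0, hA⟩ := hf
  have hmemq : MemLvar q Ω f := by
    refine ⟨hmeas, lam0, hlam0, ?_⟩
    calc rhoVar q Ω (fun x => lam0 * ‖f x‖)
        ≤ rhoVar p Ω (fun x => lam0 * ‖f x‖) + M :=
          rhoVar_le_add hqp (fun x => by positivity)
      _ < ⊤ := ENNReal.add_lt_top.mpr ⟨hA, hfin⟩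
  refine ⟨hmemq, ?_⟩
  set Sp := {lam : ℝ | 0 < lam ∧ rhoVar p Ω (fun x => ‖f x‖ / lam) ≤ 1} with hSpdef
  set Sq := {lam : ℝ | 0 < lam ∧ rhoVar q Ω (fun x => ‖f x‖ / lam) ≤ 1} with hSqdef
  have hSp : Sp.Nonempty := by
    set A := rhoVar p Ω (fun x => lam0 * ‖f x‖) with hAdef
    have hA1 : (1 : ℝ) ≤ A.toReal + 1 := by
      have := ENNReal.toReal_nonneg (a := A); linarith
    refine ⟨(A.toReal + 1) / lam0, div_pos (by linarith) hlam0, ?_⟩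
    have heq : (fun x => ‖f x‖ / ((A.toReal + 1) / lam0))
        = fun x => (lam0 * ‖f x‖) / (A.toReal + 1) := by
      funext x; field_simp
    rw [heq]
    calc rhoVar p Ω (fun x => (lam0 * ‖f x‖) / (A.toReal + 1))
        ≤ rhoVar p Ω (fun x => lam0 * ‖f x‖) / ENNReal.ofReal (A.toReal + 1) :=
          rhoVar_div_le hp1 hA1 (fun x => by positivity)
      _ ≤ 1 := by
          rw [ENNReal.ofReal_add ENNReal.toReal_nonneg zero_le_one,
            ENNReal.ofReal_toReal hA.ne, ENNReal.ofReal_one]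
          exact ENNReal.div_le_of_le_mul (by rw [one_mul]; exact le_self_add)
  have hmap : ∀ lam ∈ Sp, C * lam ∈ Sq := by
    rintro lam ⟨hlpos, hrho⟩
    refine ⟨mul_pos hCpos hlpos, ?_⟩
    have heq : (fun x => ‖f x‖ / (C * lam)) = fun x => (‖f x‖ / lam) / C := by
      funext x; rw [div_div, mul_comm]
    rw [heq]
    calc rhoVar q Ω (fun x => (‖f x‖ / lam) / C)
        ≤ rhoVar q Ω (fun x => ‖f x‖ / lam) / ENNReal.ofReal C :=
          rhoVar_div_le hq1 hC1 (fun x => by positivity)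
      _ ≤ (rhoVar p Ω (fun x => ‖f x‖ / lam) + M) / ENNReal.ofReal C :=
          ENNReal.div_le_div (rhoVar_le_add hqp (fun x => by positivity)) le_rfl
      _ ≤ (1 + M) / ENNReal.ofReal C :=
          ENNReal.div_le_div (add_le_add hrho le_rfl) le_rfl
      _ ≤ 1 := by rw [hCof, add_comm (1 : ℝ≥0∞) M]; exact ENNReal.div_self_le_one
  have hbdd : BddBelow Sq := ⟨0, fun x hx => le_of_lt hx.1⟩
  have h1 : ∀ lam ∈ Sp, sInf Sq ≤ C * lam := fun lam hl => csInf_le hbdd (hmap lam hl)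
  have h2 : sInf Sq / C ≤ sInf Sp := by
    refine le_csInf hSp fun lam hl => ?_
    rw [div_le_iff₀ hCpos]
    calc sInf Sq ≤ C * lam := h1 lam hl
      _ = lam * C := mul_comm _ _
  have : sInf Sq ≤ C * sInf Sp := by
    have := (div_le_iff₀ hCpos).mp h2
    linarith [this]
  exact this
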